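/- Let ρ be a positive definite density matrix on a finite-dimensional Hilbert space, let (ρ_N^(1)) and (ρ_N^(2)) be two sequences of density matrices both converging to ρ in trace norm, and let 0 < λ < 1. Then there exists N_λ ∈ ℕ and a sequence (σ_N) of density matrices such that ρ_N^(1) = λ ρ_N^(2) + (1−λ) σ_N for all N > N_λ. -/

import Mathlib

open Matrix Filter ComplexOrder

/-- The trace norm of a complex matrix: `‖A‖₁ = tr √(Aᴴ A)`. -/
noncomputable def traceNorm {d : ℕ} (A : Matrix (Fin d) (Fin d) ℂ) : ℝ :=
  (((Matrix.posSemidef_conjTranspose_mul_self A).1.eigenvectorUnitary : Matrix (Fin d) (Fin d) ℂ) *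
    diagonal (((↑) : ℝ → ℂ) ∘ Real.sqrt ∘ (Matrix.posSemidef_conjTranspose_mul_self A).1.eigenvalues) *
    (star (Matrix.posSemidef_conjTranspose_mul_self A).1.eigenvectorUnitary :
      Matrix (Fin d) (Fin d) ℂ)).trace.re

/-- A density matrix: positive semidefinite with trace one. -/
def IsDensityMatrix {d : ℕ} (ρ : Matrix (Fin d) (Fin d) ℂ) : Prop :=
  ρ.PosSemidef ∧ ρ.trace = 1

/-- trace norm of a Hermitian matrix is the sum of absolute values of eigenvalues -/
lemma traceNorm_hermitian {d : ℕ} (A : Matrix (Fin d) (Fin d) ℂ) (hA : A.IsHermitian) :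
    traceNorm A = ∑ i, |hA.eigenvalues i| := by
  have hAA := (Matrix.posSemidef_conjTranspose_mul_self A).1
  have hT : ((hAA.eigenvectorUnitary : Matrix (Fin d) (Fin d) ℂ) *
      diagonal (((↑) : ℝ → ℂ) ∘ Real.sqrt ∘ hAA.eigenvalues) *
      (star hAA.eigenvectorUnitary : Matrix (Fin d) (Fin d) ℂ)) = cfc Real.sqrt (Aᴴ * A) := by
    rw [hAA.cfc_eq, IsHermitian.cfc, Unitary.conjStarAlgAut_apply]
    rfl
  have hsq : Aᴴ * A = cfc (fun x : ℝ => x ^ 2) A := by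
    rw [cfc_pow_id A 2 hA.isSelfAdjoint, hA.eq, sq]
  have hcomp : cfc Real.sqrt (Aᴴ * A) = cfc (fun x : ℝ => |x|) A := by
    rw [hsq, ← cfc_comp' Real.sqrt (fun x : ℝ => x ^ 2) A]
    congr 1
    funext x
    exact Real.sqrt_sq_eq_abs x
  unfold traceNorm
  rw [hT, hcomp, hA.cfc_eq, IsHermitian.cfc, Unitary.conjStarAlgAut_apply, Matrix.trace_mul_cycle,
    Matrix.UnitaryGroup.star_mul_self, Matrix.one_mul, trace_diagonal]
  simp

lemma psd_smul_real {d : ℕ} {c : ℝ} (hc : 0 ≤ c) {A : Matrix (Fin d) (Fin d) ℂ}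
    (hA : A.PosSemidef) : PosSemidef ((c : ℂ) • A) := by
  constructor
  · show ((c : ℂ) • A)ᴴ = (c : ℂ) • A
    rw [conjTranspose_smul, hA.1.eq]
    simp [Complex.conj_ofReal]
  · intro x
    exact (hA.smul (α := ℂ) (by exact_mod_cast hc)).2 x

lemma sub_smul_one_psd {d : ℕ} (A : Matrix (Fin d) (Fin d) ℂ) (hA : A.IsHermitian) (c : ℝ)
    (hc : ∀ i, c ≤ hA.eigenvalues i) : PosSemidef (A - (c : ℂ) • 1) := by
  set U : Matrix (Fin d) (Fin d) ℂ := (hA.eigenvectorUnitary : Matrix (Fin d) (Fin d) ℂ)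
  have hU' : U * star U = 1 := hA.eigenvectorUnitary.2.2
  have h1 : (c : ℂ) • (1 : Matrix (Fin d) (Fin d) ℂ) = U * ((c : ℂ) • 1) * star U := by
    rw [Matrix.mul_smul, Matrix.mul_one, Matrix.smul_mul, hU']
  have key : A - (c : ℂ) • 1
      = U * (diagonal (fun i => ((hA.eigenvalues i - c : ℝ) : ℂ))) * star U := by
    conv_lhs => rw [hA.spectral_theorem, h1]
    rw [Unitary.conjStarAlgAut_apply]
    rw [← Matrix.sub_mul, ← Matrix.mul_sub]
    congr 2
    rw [Matrix.smul_one_eq_diagonal, diagonal_sub]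
    funext i
    simp
  rw [key, Matrix.star_eq_conjTranspose]
  exact (posSemidef_diagonal_iff.mpr fun i => by
    have := hc i
    rw [Complex.zero_le_real]
    linarith).mul_mul_conjTranspose_same U

lemma smul_one_sub_psd {d : ℕ} (A : Matrix (Fin d) (Fin d) ℂ) (hA : A.IsHermitian) (c : ℝ)
    (hc : ∀ i, hA.eigenvalues i ≤ c) : PosSemidef ((c : ℂ) • 1 - A) := by
  set U : Matrix (Fin d) (Fin d) ℂ := (hA.eigenvectorUnitary : Matrix (Fin d) (Fin d) ℂ)
  have hU' : U * star U = 1 := hA.eigenvectorUnitary.2.2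
  have h1 : (c : ℂ) • (1 : Matrix (Fin d) (Fin d) ℂ) = U * ((c : ℂ) • 1) * star U := by
    rw [Matrix.mul_smul, Matrix.mul_one, Matrix.smul_mul, hU']
  have key : (c : ℂ) • 1 - A
      = U * (diagonal (fun i => ((c - hA.eigenvalues i : ℝ) : ℂ))) * star U := by
    conv_lhs => rw [hA.spectral_theorem, h1]
    rw [Unitary.conjStarAlgAut_apply]
    rw [← Matrix.sub_mul, ← Matrix.mul_sub]
    congr 2
    rw [Matrix.smul_one_eq_diagonal, diagonal_sub]
    funext i
    simp
  rw [key, Matrix.star_eq_conjTranspose]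
  exact (posSemidef_diagonal_iff.mpr fun i => by
    have := hc i
    rw [Complex.zero_le_real]
    linarith).mul_mul_conjTranspose_same U

/-- if `ρ` is a positive definite density matrix and `ρ₁ N`, `ρ₂ N` are sequences of
density matrices converging to `ρ` in trace norm, then for each `0 < λ < 1` there is `N_λ` and a
sequence `σ N` of density matrices with `ρ₁ N = λ • ρ₂ N + (1 - λ) • σ N` for all `N > N_λ`. -/
theorem density_matrix_convex_decomposition
    {d : ℕ} (ρ : Matrix (Fin d) (Fin d) ℂ)
    (hρ : ρ.PosDef) (hρtr : ρ.trace = 1)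
    (ρ₁ ρ₂ : ℕ → Matrix (Fin d) (Fin d) ℂ)
    (h₁ : ∀ N, IsDensityMatrix (ρ₁ N)) (h₂ : ∀ N, IsDensityMatrix (ρ₂ N))
    (hlim₁ : Tendsto (fun N => traceNorm (ρ₁ N - ρ)) atTop (nhds 0))
    (hlim₂ : Tendsto (fun N => traceNorm (ρ₂ N - ρ)) atTop (nhds 0))
    (lam : ℝ) (hlam0 : 0 < lam) (hlam1 : lam < 1) :
    ∃ (Nlam : ℕ) (σ : ℕ → Matrix (Fin d) (Fin d) ℂ),
      (∀ N, IsDensityMatrix (σ N)) ∧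
      ∀ N > Nlam, ρ₁ N = (lam : ℂ) • ρ₂ N + ((1 - lam : ℝ) : ℂ) • σ N := by
  -- d cannot be 0
  rcases Nat.eq_zero_or_pos d with hd | hd
  · exfalso
    subst hd
    rw [Matrix.trace] at hρtr
    simp at hρtr
  have : Nonempty (Fin d) := ⟨⟨0, hd⟩⟩
  -- minimal eigenvalue of ρ
  set κ : ℝ := Finset.univ.inf' Finset.univ_nonempty hρ.1.eigenvalues with hκdef
  have hκpos : 0 < κ := by
    obtain ⟨i, _, hi⟩ := Finset.exists_mem_eq_inf' Finset.univ_nonempty hρ.1.eigenvalues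
    rw [hκdef, hi]
    exact hρ.eigenvalues_pos i
  have hκle : ∀ i, κ ≤ hρ.1.eigenvalues i := fun i =>
    Finset.inf'_le _ (Finset.mem_univ i)
  have hρκ : PosSemidef (ρ - (κ : ℂ) • 1) := sub_smul_one_psd ρ hρ.1 κ hκle
  -- eventual bound
  have hε : (0:ℝ) < (1 - lam) * κ := mul_pos (by linarith) hκpos
  have hsum : Tendsto (fun N => traceNorm (ρ₁ N - ρ) + lam * traceNorm (ρ₂ N - ρ))
      atTop (nhds 0) := by
    have := hlim₁.add (hlim₂.const_mul lam)
    simpa using this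
  obtain ⟨N₀, hN₀⟩ := eventually_atTop.1 ((tendsto_order.1 hsum).2 _ hε)
  -- positivity of ρ₁ N - lam • ρ₂ N for N ≥ N₀
  have hMpsd : ∀ N, N₀ ≤ N → PosSemidef (ρ₁ N - (lam : ℂ) • ρ₂ N) := by
    intro N hN
    set t₁ := traceNorm (ρ₁ N - ρ) with ht₁
    set t₂ := traceNorm (ρ₂ N - ρ) with ht₂
    have hherm₁ : (ρ₁ N - ρ).IsHermitian := (h₁ N).1.1.sub hρ.1
    have hherm₂ : (ρ₂ N - ρ).IsHermitian := (h₂ N).1.1.sub hρ.1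
    have habs₁ : ∀ i, |hherm₁.eigenvalues i| ≤ t₁ := by
      intro i
      rw [ht₁, traceNorm_hermitian _ hherm₁]
      exact Finset.single_le_sum (f := fun j => |hherm₁.eigenvalues j|) (fun j _ => abs_nonneg _) (Finset.mem_univ i)
    have habs₂ : ∀ i, |hherm₂.eigenvalues i| ≤ t₂ := by
      intro i
      rw [ht₂, traceNorm_hermitian _ hherm₂]
      exact Finset.single_le_sum (f := fun j => |hherm₂.eigenvalues j|) (fun j _ => abs_nonneg _) (Finset.mem_univ i)
    have hB₁ : PosSemidef (((1 - lam : ℝ) : ℂ) • (ρ - (κ : ℂ) • 1)) :=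
      psd_smul_real (by linarith) hρκ
    have hB₂ : PosSemidef ((ρ₁ N - ρ) - ((-t₁ : ℝ) : ℂ) • 1) :=
      sub_smul_one_psd _ hherm₁ (-t₁) fun i => by
        have := habs₁ i; have := abs_le.1 this; linarith [this.1]
    have hB₃ : PosSemidef ((lam : ℂ) • (((t₂ : ℝ) : ℂ) • 1 - (ρ₂ N - ρ))) :=
      psd_smul_real hlam0.le (smul_one_sub_psd _ hherm₂ t₂ fun i => (abs_le.1 (habs₂ i)).2)
    have hB₄ : PosSemidef ((((1 - lam) * κ - t₁ - lam * t₂ : ℝ) : ℂ)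
        • (1 : Matrix (Fin d) (Fin d) ℂ)) := by
      refine psd_smul_real ?_ Matrix.PosSemidef.one
      have := hN₀ N hN
      rw [← ht₁, ← ht₂] at this
      linarith
    have hsum' := ((hB₁.add hB₂).add hB₃).add hB₄
    have hEq : ((((1 - lam : ℝ) : ℂ) • (ρ - (κ : ℂ) • 1) + ((ρ₁ N - ρ) - ((-t₁ : ℝ) : ℂ) • 1))
        + (lam : ℂ) • (((t₂ : ℝ) : ℂ) • 1 - (ρ₂ N - ρ)))
        + (((1 - lam) * κ - t₁ - lam * t₂ : ℝ) : ℂ) • (1 : Matrix (Fin d) (Fin d) ℂ)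
        = ρ₁ N - (lam : ℂ) • ρ₂ N := by
      push_cast
      module
    rwa [hEq] at hsum'
  -- construct σ
  set σ : ℕ → Matrix (Fin d) (Fin d) ℂ := fun N =>
    if N₀ < N then (((1 - lam)⁻¹ : ℝ) : ℂ) • (ρ₁ N - (lam : ℂ) • ρ₂ N) else ρ with hσdef
  have hlamne : ((1 - lam : ℝ) : ℂ) ≠ 0 := by
    simp only [ne_eq, Complex.ofReal_eq_zero]
    intro h; linarith
  refine ⟨N₀, σ, fun N => ?_, fun N hN => ?_⟩
  · rw [hσdef]
    by_cases h : N₀ < N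
    · simp only [h, if_true]
      constructor
      · exact psd_smul_real (inv_nonneg.mpr (by linarith)) (hMpsd N h.le)
      · rw [trace_smul, trace_sub, trace_smul, (h₁ N).2, (h₂ N).2]
        have h2 : (1 : ℂ) - (lam : ℂ) ≠ 0 := by
          intro h; apply hlamne; push_cast; linear_combination h
        push_cast
        rw [smul_eq_mul]
        field_simp
        simp
    · simp only [h, if_false]
      exact ⟨hρ.posSemidef, hρtr⟩
  · have hσN : σ N = (((1 - lam)⁻¹ : ℝ) : ℂ) • (ρ₁ N - (lam : ℂ) • ρ₂ N) := by
      rw [hσdef]; simp [hN]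
    rw [hσN, smul_smul]
    have : ((1 - lam : ℝ) : ℂ) * (((1 - lam)⁻¹ : ℝ) : ℂ) = 1 := by
      rw [← Complex.ofReal_mul, mul_inv_cancel₀ (by intro h; apply hlamne; simp [h])]
      simp
    rw [this, one_smul]
    abel
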